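/- arXiv:2212.04723 — 6 statements merged into one kernel-verified Lean document; each statement's English description precedes it below -/
import Mathlib

section
/- With k(y) = 1 − y² + (2/(p+1))(y^{p+1} − 1), the identity (k'(y))² − 2k(y)k''(y) = −4p(p−1)∫₁^y t^{p-2} k(t) dt holds for all y > 0. -/
open Real intervalIntegral

theorem k_identity (p : ℝ) (hp : 1 < p)
    (k : ℝ → ℝ)
    (hk : ∀ y : ℝ, k y = 1 - y ^ 2 + (2 / (p + 1)) * (y ^ (p + 1) - 1)) :
    ∀ y : ℝ, 0 < y →
      (2 * (y ^ p - y)) ^ 2 - 2 * k y * (2 * (p * y ^ (p - 1) - 1)) =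
        -4 * p * (p - 1) * ∫ t in (1 : ℝ)..y, t ^ (p - 2) * k t := by
  intro y hy
  have hy0 : y ≠ 0 := ne_of_gt hy
  have hp1 : p + 1 ≠ 0 := by linarith
  have hp1' : p - 1 ≠ 0 := by linarith
  have hp0 : p ≠ 0 := by linarith
  have e1 : (-1 : ℝ) < p - 2 := by linarith
  have e2 : (-1 : ℝ) < p := by linarith
  have e3 : (-1 : ℝ) < 2 * p - 1 := by linarith
  have hmem : ∀ t ∈ Set.uIcc (1 : ℝ) y, 0 < t := by
    intro t ht
    rcases Set.mem_uIcc.mp ht with h | h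
    · linarith [h.1]
    · linarith [h.1]
  have hEq : Set.EqOn (fun t => t ^ (p - 2) * k t)
      (fun t => ((p - 1) / (p + 1)) * t ^ (p - 2) + (-1 : ℝ) * t ^ p
        + (2 / (p + 1)) * t ^ (2 * p - 1)) (Set.uIcc 1 y) := by
    intro t ht
    have ht0 : 0 < t := hmem t ht
    have h1 : t ^ p = t ^ (p - 2) * t ^ 2 := by
      rw [show p = (p - 2) + 2 by ring, rpow_add ht0]
      norm_num [Real.rpow_natCast]
    have h2 : t ^ (2 * p - 1) = t ^ (p - 2) * t ^ (p + 1) := by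
      rw [← rpow_add ht0]; ring_nf
    simp only [hk]
    rw [h1, h2]; field_simp; ring
  rw [intervalIntegral.integral_congr hEq]
  have i1 : IntervalIntegrable (fun t : ℝ => ((p - 1) / (p + 1)) * t ^ (p - 2))
      MeasureTheory.volume 1 y := (intervalIntegrable_rpow' e1).const_mul _
  have i2 : IntervalIntegrable (fun t : ℝ => (-1 : ℝ) * t ^ p)
      MeasureTheory.volume 1 y := (intervalIntegrable_rpow' e2).const_mul _
  have i3 : IntervalIntegrable (fun t : ℝ => (2 / (p + 1)) * t ^ (2 * p - 1))
      MeasureTheory.volume 1 y := (intervalIntegrable_rpow' e3).const_mul _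
  rw [intervalIntegral.integral_add (i1.add i2) i3, intervalIntegral.integral_add i1 i2,
    intervalIntegral.integral_const_mul, intervalIntegral.integral_const_mul,
    intervalIntegral.integral_const_mul,
    integral_rpow (Or.inl e1), integral_rpow (Or.inl e2), integral_rpow (Or.inl e3)]
  have hA1 : y ^ (p + 1) = y ^ p * y := rpow_add_one hy0 p
  have hA2 : y ^ (p - 1) = y ^ p * y⁻¹ := by
    rw [show p - 1 = p + (-1) by ring, rpow_add hy, rpow_neg_one]
  have hA3 : y ^ (2 * p) = y ^ p * y ^ p := by
    rw [show 2 * p = p + p by ring, rpow_add hy]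
  rw [show p - 2 + 1 = p - 1 by ring, show 2 * p - 1 + 1 = 2 * p by ring,
    hk y, hA1, hA2, hA3, one_rpow]
  simp only [one_rpow]
  field_simp
  ring
end

section
/- Define Φ(y) = 3 y^{2−p} k''(y) ∫₁^y t^{p-2} k(t) dt − k(y) k'(y) with k(y) = 1 − y² + (2/(p+1))(y^{p+1} − 1). Then for p ≥ 2, Φ'(y) = (6(p−2)y^{1−p} + 2p(2p+1)) ∫₁^y t^{p-2} k(t) dt for all y > 0. -/
open Real intervalIntegral

theorem Phi_derivative (p : ℝ) (hp : 2 ≤ p)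
    (k Φ : ℝ → ℝ)
    (hk : ∀ y : ℝ, k y = 1 - y ^ 2 + (2 / (p + 1)) * (y ^ (p + 1) - 1))
    (hΦ : ∀ y : ℝ, Φ y =
      3 * y ^ (2 - p) * (2 * (p * y ^ (p - 1) - 1)) * (∫ t in (1 : ℝ)..y, t ^ (p - 2) * k t)
        - k y * (2 * (y ^ p - y))) :
    ∀ y : ℝ, 0 < y →
      HasDerivAt Φ ((6 * (p - 2) * y ^ (1 - p) + 2 * p * (2 * p + 1)) *
        ∫ t in (1 : ℝ)..y, t ^ (p - 2) * k t) y := by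
  have hp1 : p + 1 ≠ 0 := by linarith
  have hpm1 : p - 1 ≠ 0 := by linarith
  have hp0 : p ≠ 0 := by linarith
  -- closed form for the integral
  set Icf : ℝ → ℝ := fun x =>
    (1 - 2/(p+1)) * ((x^(p-1) - 1)/(p-1)) - (x^(p+1) - 1)/(p+1)
      + (2/(p+1)) * ((x^(2*p) - 1)/(2*p)) with hIcf
  have hI : ∀ x : ℝ, 0 < x → (∫ t in (1:ℝ)..x, t ^ (p-2) * k t) = Icf x := by
    intro x hx
    have hcong : Set.EqOn (fun t : ℝ => t ^ (p-2) * k t)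
        (fun t : ℝ => (1 - 2/(p+1)) * t^(p-2) - t^p + (2/(p+1)) * t^(2*p-1))
        (Set.uIcc 1 x) := by
      intro t ht
      have ht0 : 0 < t := lt_of_lt_of_le (lt_min one_pos hx) ht.1
      simp only [hk]
      have h1 : t ^ (p-2) * t ^ (2:ℕ) = t ^ p := by
        rw [← Real.rpow_natCast t 2, ← Real.rpow_add ht0]; norm_num
      have h2 : t ^ (p-2) * t ^ (p+1) = t ^ (2*p-1) := by
        rw [← Real.rpow_add ht0]; ring_nf
      linear_combination (-1 : ℝ) * h1 + (2/(p+1)) * h2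
    rw [intervalIntegral.integral_congr hcong]
    have i1 : IntervalIntegrable (fun t : ℝ => t^(p-2)) MeasureTheory.volume 1 x :=
      intervalIntegral.intervalIntegrable_rpow' (by linarith)
    have i2 : IntervalIntegrable (fun t : ℝ => t^p) MeasureTheory.volume 1 x :=
      intervalIntegral.intervalIntegrable_rpow' (by linarith)
    have i3 : IntervalIntegrable (fun t : ℝ => t^(2*p-1)) MeasureTheory.volume 1 x :=
      intervalIntegral.intervalIntegrable_rpow' (by linarith)
    rw [intervalIntegral.integral_add (((i1.const_mul _).sub i2)) (i3.const_mul _),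
      intervalIntegral.integral_sub (i1.const_mul _) i2,
      intervalIntegral.integral_const_mul, intervalIntegral.integral_const_mul,
      integral_rpow (Or.inl (by linarith)), integral_rpow (Or.inl (by linarith)),
      integral_rpow (Or.inl (by linarith))]
    rw [show p - 2 + 1 = p - 1 by ring, show 2*p - 1 + 1 = 2*p by ring]
    simp [hIcf, Real.one_rpow]
  intro y hy
  have hy0 : y ≠ 0 := ne_of_gt hy
  -- the smooth model function
  have hEq : Φ =ᶠ[nhds y] fun x =>
      3 * x ^ (2-p) * (2 * (p * x ^ (p-1) - 1)) * Icf x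
        - (1 - x ^ 2 + (2/(p+1)) * (x ^ (p+1) - 1)) * (2 * (x ^ p - x)) := by
    filter_upwards [isOpen_Ioi.mem_nhds hy] with x hx
    rw [hΦ, hk, hI x hx]
  rw [hI y hy]
  refine HasDerivAt.congr_of_eventuallyEq ?_ hEq
  -- basic derivatives
  have d1 : HasDerivAt (fun x : ℝ => x ^ (2-p)) ((2-p) * y ^ (2-p-1)) y :=
    Real.hasDerivAt_rpow_const (Or.inl hy0)
  have d2 : HasDerivAt (fun x : ℝ => x ^ (p-1)) ((p-1) * y ^ (p-1-1)) y :=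
    Real.hasDerivAt_rpow_const (Or.inl hy0)
  have d3 : HasDerivAt (fun x : ℝ => x ^ (p+1)) ((p+1) * y ^ (p+1-1)) y :=
    Real.hasDerivAt_rpow_const (Or.inl hy0)
  have d4 : HasDerivAt (fun x : ℝ => x ^ (2*p)) ((2*p) * y ^ (2*p-1)) y :=
    Real.hasDerivAt_rpow_const (Or.inl hy0)
  have d5 : HasDerivAt (fun x : ℝ => x ^ p) (p * y ^ (p-1)) y :=
    Real.hasDerivAt_rpow_const (Or.inl hy0)
  have hA : HasDerivAt (fun x : ℝ => 3 * x ^ (2-p) * (2 * (p * x ^ (p-1) - 1)))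
      ((3 * ((2-p) * y ^ (2-p-1))) * (2 * (p * y ^ (p-1) - 1))
        + (3 * y ^ (2-p)) * (2 * (p * ((p-1) * y ^ (p-1-1))))) y :=
    (d1.const_mul 3).mul (((d2.const_mul p).sub_const 1).const_mul 2)
  have hB : HasDerivAt Icf
      ((1 - 2/(p+1)) * (((p-1) * y ^ (p-1-1))/(p-1)) - ((p+1) * y ^ (p+1-1))/(p+1)
        + (2/(p+1)) * (((2*p) * y ^ (2*p-1))/(2*p))) y :=
    ((((d2.sub_const 1).div_const (p-1)).const_mul _).sub
      ((d3.sub_const 1).div_const (p+1))).add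
      (((d4.sub_const 1).div_const (2*p)).const_mul _)
  have hC : HasDerivAt (fun x : ℝ => 1 - x ^ 2 + (2/(p+1)) * (x ^ (p+1) - 1))
      (-(2 * y) + (2/(p+1)) * ((p+1) * y ^ (p+1-1))) y := by
    have hx2 : HasDerivAt (fun x : ℝ => x ^ (2:ℕ)) (2 * y) y := by
      simpa using hasDerivAt_pow 2 y
    exact (hx2.const_sub 1).add ((d3.sub_const 1).const_mul _)
  have hD : HasDerivAt (fun x : ℝ => 2 * (x ^ p - x)) (2 * (p * y ^ (p-1) - 1)) y :=
    (d5.sub (hasDerivAt_id y)).const_mul 2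
  have hk0 : HasDerivAt (fun x : ℝ => 1 - x ^ 2 + (2/(p+1)) * (x ^ (p+1) - 1)) _ y := hC
  have hG := (hA.mul hB).sub (hC.mul hD)
  convert hG using 1
  · rfl
  -- algebra
  have hyp : (0:ℝ) < y ^ p := Real.rpow_pos_of_pos hy p
  have r2 : y ^ (2:ℝ) = y * y := by
    rw [show (2:ℝ) = 1+1 by norm_num, Real.rpow_add hy, Real.rpow_one]
  have v1 : y ^ (p-1) = y ^ p / y := by rw [Real.rpow_sub hy, Real.rpow_one]
  have v2 : y ^ (p-1-1) = y ^ p / y / y := by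
    rw [Real.rpow_sub hy (p-1) 1, Real.rpow_one, v1]
  have v3 : y ^ (p+1) = y ^ p * y := by rw [Real.rpow_add hy, Real.rpow_one]
  have v4 : y ^ (p+1-1) = y ^ p := by rw [show p+1-1 = p by ring]
  have v5 : y ^ (2*p) = y ^ p * y ^ p := by rw [show 2*p = p+p by ring, Real.rpow_add hy]
  have v6 : y ^ (2*p-1) = y ^ p * y ^ p / y := by
    rw [Real.rpow_sub hy (2*p) 1, Real.rpow_one, v5]
  have v7 : y ^ (2-p) = y * y / y ^ p := by rw [Real.rpow_sub hy, r2]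
  have v8 : y ^ (2-p-1) = y * y / y ^ p / y := by
    rw [Real.rpow_sub hy (2-p) 1, Real.rpow_one, v7]
  have v9 : y ^ (1-p) = y / y ^ p := by rw [Real.rpow_sub hy, Real.rpow_one]
  simp only [hIcf, v8, v2, v6, v4, v7, v1, v3, v5, v9, pow_two]
  field_simp
  ring
end

section
/- For p ≥ 2, the function Φ(y) = 3 y^{2−p} k''(y) ∫₁^y t^{p-2} k(t) dt − k(y) k'(y) satisfies Φ(1) = 0, Φ'(y) > 0 for y ∈ (1, ((p+1)/2)^{1/(p-1)}), Φ'(y) < 0 for y ∈ (0,1), and hence Φ(y) > 0 for all y ∈ (0, ((p+1)/2)^{1/(p-1)}] with y ≠ 1. -/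
open Real Set intervalIntegral

theorem Phi_positive_p_ge_two (p : ℝ) (hp : 2 ≤ p)
    (k Φ : ℝ → ℝ)
    (hk : ∀ y : ℝ, k y = 1 - y ^ 2 + (2 / (p + 1)) * (y ^ (p + 1) - 1))
    (hΦ : ∀ y : ℝ, Φ y =
      3 * y ^ (2 - p) * (2 * (p * y ^ (p - 1) - 1)) * (∫ t in (1 : ℝ)..y, t ^ (p - 2) * k t)
        - k y * (2 * (y ^ p - y))) :
    Φ 1 = 0 ∧
    (∀ y ∈ Ioo (1 : ℝ) (((p + 1) / 2) ^ (1 / (p - 1))), 0 < deriv Φ y) ∧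
    (∀ y ∈ Ioo (0 : ℝ) 1, deriv Φ y < 0) ∧
    (∀ y ∈ Ioc (0 : ℝ) (((p + 1) / 2) ^ (1 / (p - 1))), y ≠ 1 → 0 < Φ y) := by
  have hp1 : (0:ℝ) < p + 1 := by linarith
  have hp1' : p + 1 ≠ 0 := ne_of_gt hp1
  -- k at 1
  have hk1 : k 1 = 0 := by
    rw [hk]; simp [Real.one_rpow]
  -- continuity of k
  have hkC : Continuous k := by
    have h : Continuous fun y : ℝ => 1 - y ^ 2 + (2 / (p + 1)) * (y ^ (p + 1) - 1) := by
      apply Continuous.add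
      · exact continuous_const.sub (continuous_pow 2)
      · apply continuous_const.mul
        apply Continuous.sub _ continuous_const
        rw [continuous_iff_continuousAt]
        intro x
        exact Real.continuousAt_rpow_const x _ (Or.inr (by linarith))
    exact h.congr fun x => (hk x).symm
  -- derivative of k
  have hkD : ∀ y : ℝ, 0 < y → HasDerivAt k (2 * (y ^ p - y)) y := by
    intro y hy
    have h1 : HasDerivAt (fun y : ℝ => y ^ (p+1)) ((p+1) * y ^ (p+1-1)) y :=
      Real.hasDerivAt_rpow_const (Or.inl hy.ne')
    have h2 : HasDerivAt (fun y : ℝ => 1 - y ^ 2 + (2 / (p + 1)) * (y ^ (p + 1) - 1))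
        (0 - (2:ℕ) * y ^ (2-1) + (2/(p+1)) * ((p+1) * y ^ (p+1-1))) y :=
      ((hasDerivAt_const y (1:ℝ)).sub (hasDerivAt_pow 2 y)).add
        ((h1.sub_const 1).const_mul (2/(p+1)))
    have he : (0 - ((2:ℕ):ℝ) * y ^ (2-1) + (2/(p+1)) * ((p+1) * y ^ (p+1-1)))
        = 2 * (y ^ p - y) := by
      have h3 : p + 1 - 1 = p := by ring
      rw [h3]
      push_cast
      field_simp
      ring
    rw [he] at h2
    exact h2.congr_of_eventuallyEq (Filter.Eventually.of_forall hk)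
  -- positivity of k away from 1
  have hkpos : ∀ y : ℝ, 0 < y → y ≠ 1 → 0 < k y := by
    intro y hy hne
    rcases lt_or_gt_of_ne hne with h1 | h1
    · have hanti : StrictAntiOn k (Icc (0:ℝ) 1) := by
        apply strictAntiOn_of_deriv_neg (convex_Icc 0 1) hkC.continuousOn
        intro x hx
        rw [interior_Icc] at hx
        rw [(hkD x hx.1).deriv]
        have hxp : x ^ p < x := by
          calc x ^ p < x ^ (1:ℝ) := Real.rpow_lt_rpow_of_exponent_gt hx.1 hx.2 (by linarith)
          _ = x := Real.rpow_one x
        linarith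
      have h2 := hanti ⟨hy.le, h1.le⟩ ⟨zero_le_one, le_refl 1⟩ h1
      rwa [hk1] at h2
    · have hmono : StrictMonoOn k (Ici (1:ℝ)) := by
        apply strictMonoOn_of_deriv_pos (convex_Ici 1) hkC.continuousOn
        intro x hx
        rw [interior_Ici] at hx
        have hx1 : 1 < x := hx
        rw [(hkD x (by linarith)).deriv]
        have hxp : x < x ^ p := by
          calc x = x ^ (1:ℝ) := (Real.rpow_one x).symm
          _ < x ^ p := Real.rpow_lt_rpow_of_exponent_lt hx1 (by linarith)
        linarith
      have h2 := hmono (mem_Ici.2 le_rfl) (mem_Ici.2 h1.le) h1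
      rwa [hk1] at h2
  -- the integrand
  have hfc : ContinuousOn (fun t : ℝ => t ^ (p - 2) * k t) (Ioi 0) := by
    apply ContinuousOn.mul _ hkC.continuousOn
    intro x hx
    exact (Real.continuousAt_rpow_const x _ (Or.inl (ne_of_gt hx))).continuousWithinAt
  have hsub : ∀ y : ℝ, 0 < y → uIcc (1:ℝ) y ⊆ Ioi 0 := by
    intro y hy t ht
    have h1 : (0:ℝ) < min 1 y := lt_min one_pos hy
    exact lt_of_lt_of_le h1 ht.1
  have hInt : ∀ y : ℝ, 0 < y → IntervalIntegrable (fun t : ℝ => t ^ (p - 2) * k t) MeasureTheory.volume 1 y :=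
    fun y hy => (hfc.mono (hsub y hy)).intervalIntegrable
  have hID : ∀ y : ℝ, 0 < y →
      HasDerivAt (fun u => ∫ t in (1:ℝ)..u, t ^ (p - 2) * k t) (y ^ (p - 2) * k y) y := by
    intro y hy
    exact intervalIntegral.integral_hasDerivAt_right (hInt y hy)
      (hfc.stronglyMeasurableAtFilter isOpen_Ioi y hy)
      (hfc.continuousAt (isOpen_Ioi.mem_nhds hy))
  -- sign of the integral
  have hIpos : ∀ y : ℝ, 1 < y → 0 < ∫ t in (1:ℝ)..y, t ^ (p-2) * k t := by
    intro y hy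
    apply intervalIntegral.intervalIntegral_pos_of_pos_on (hInt y (by linarith))
    · intro x hx
      have hx0 : (0:ℝ) < x := by linarith [hx.1]
      exact mul_pos (Real.rpow_pos_of_pos hx0 _) (hkpos x hx0 hx.1.ne')
    · exact hy
  have hIneg : ∀ y : ℝ, 0 < y → y < 1 → (∫ t in (1:ℝ)..y, t ^ (p-2) * k t) < 0 := by
    intro y hy0 hy1
    have h1 : 0 < ∫ t in y..(1:ℝ), t ^ (p-2) * k t := by
      apply intervalIntegral.intervalIntegral_pos_of_pos_on ((hInt y hy0).symm)
      · intro x hx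
        have hx0 : (0:ℝ) < x := lt_trans hy0 hx.1
        exact mul_pos (Real.rpow_pos_of_pos hx0 _) (hkpos x hx0 (ne_of_lt hx.2))
      · exact hy1
    have h2 : (∫ t in (1:ℝ)..y, t ^ (p-2) * k t) = -∫ t in y..(1:ℝ), t ^ (p-2) * k t :=
      intervalIntegral.integral_symm y 1
    rw [h2]
    linarith
  -- G function
  set G : ℝ → ℝ := fun y => 4*(p*y^(p-1) - 1) * k y - 4*(y^p - y)^2 with hGdef
  have hGD : ∀ y : ℝ, 0 < y → HasDerivAt G (4*p*(p-1)*y^(p-2) * k y) y := by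
    intro y hy
    have h1 : HasDerivAt (fun y : ℝ => 4*(p*y^(p-1) - 1)) (4*(p*((p-1)*y^(p-1-1)))) y := by
      exact (((Real.hasDerivAt_rpow_const (p := p-1) (Or.inl hy.ne')).const_mul p).sub_const 1).const_mul 4
    have h2 : HasDerivAt (fun y : ℝ => y ^ p - y) (p * y ^ (p-1) - 1) y := by
      exact (Real.hasDerivAt_rpow_const (p := p) (Or.inl hy.ne')).sub (hasDerivAt_id y)
    have h3 : HasDerivAt (fun y : ℝ => 4*((y ^ p - y)^2)) (4*(2*(y^p - y)^1*(p * y ^ (p-1) - 1))) y :=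
      (h2.pow 2).const_mul 4
    have h4 := (h1.mul (hkD y hy)).sub h3
    have he : 4*(p*((p-1)*y^(p-1-1))) * k y + 4*(p*y^(p-1) - 1) * (2 * (y ^ p - y))
        - 4*(2*(y^p - y)^1*(p * y ^ (p-1) - 1)) = 4*p*(p-1)*y^(p-2) * k y := by
      have h5 : p - 1 - 1 = p - 2 := by ring
      rw [h5]; ring
    rw [he] at h4
    exact h4.congr_of_eventuallyEq (Filter.Eventually.of_forall (fun x => by rfl))
  have hG1 : G 1 = 0 := by
    simp [hGdef, hk1, Real.one_rpow]
  have hGC : ContinuousOn G (Ioi 0) :=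
    fun x hx => ((hGD x hx).continuousAt).continuousWithinAt
  have hGpos : ∀ y : ℝ, 1 < y → 0 < G y := by
    intro y hy
    have hmono : StrictMonoOn G (Ici (1:ℝ)) := by
      apply strictMonoOn_of_deriv_pos (convex_Ici 1) (hGC.mono (fun x hx => mem_Ioi.2 (lt_of_lt_of_le one_pos hx)))
      intro x hx
      rw [interior_Ici] at hx
      have hx1 : (1:ℝ) < x := hx
      rw [(hGD x (by linarith)).deriv]
      have hr := Real.rpow_pos_of_pos (show (0:ℝ) < x by linarith) (p-2)
      have hkx := hkpos x (by linarith) hx1.ne'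
      have hp0 : (0:ℝ) < p := by linarith
      have hpm : (0:ℝ) < p - 1 := by linarith
      exact mul_pos (mul_pos (mul_pos (mul_pos four_pos hp0) hpm) hr) hkx
    have h2 := hmono (mem_Ici.2 le_rfl) (mem_Ici.2 hy.le) hy
    rwa [hG1] at h2
  have hGneg : ∀ y : ℝ, 0 < y → y < 1 → G y < 0 := by
    intro y hy0 hy1
    have hmono : StrictMonoOn G (Ioc (0:ℝ) 1) := by
      apply strictMonoOn_of_deriv_pos (convex_Ioc 0 1) (hGC.mono (fun x hx => hx.1))
      intro x hx
      rw [interior_Ioc] at hx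
      rw [(hGD x hx.1).deriv]
      have hr := Real.rpow_pos_of_pos hx.1 (p-2)
      have hkx := hkpos x hx.1 (ne_of_lt hx.2)
      have hp0 : (0:ℝ) < p := by linarith
      have hpm : (0:ℝ) < p - 1 := by linarith
      exact mul_pos (mul_pos (mul_pos (mul_pos four_pos hp0) hpm) hr) hkx
    have h2 := hmono ⟨hy0, hy1.le⟩ ⟨one_pos, le_refl 1⟩ hy1
    rwa [hG1] at h2
  -- derivative of Φ
  have hΦD : ∀ y : ℝ, 0 < y → HasDerivAt Φ
      (6*(p + (p-2) * y^(1-p)) * (∫ t in (1:ℝ)..y, t ^ (p-2) * k t) + G y) y := by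
    intro y hy
    have hA : HasDerivAt (fun y : ℝ => 6*(p*y - y^(2-p))) (6*(p*1 - (2-p)*y^(2-p-1))) y := by
      exact (((hasDerivAt_id y).const_mul p).sub
        (Real.hasDerivAt_rpow_const (p := 2-p) (Or.inl hy.ne'))).const_mul 6
    have hB : HasDerivAt (fun y : ℝ => 2 * (y ^ p - y)) (2 * (p * y ^ (p-1) - 1)) y := by
      simpa using ((Real.hasDerivAt_rpow_const (p := p) (Or.inl hy.ne')).sub (hasDerivAt_id y)).const_mul 2
    have h4 := ((hA.mul (hID y hy)).sub ((hkD y hy).mul hB))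
    -- rewrite the function to Φ near y
    have heq : (fun y : ℝ => 6*(p*y - y^(2-p)) * (∫ t in (1:ℝ)..y, t ^ (p-2) * k t)
        - k y * (2 * (y ^ p - y))) =ᶠ[nhds y] Φ := by
      filter_upwards [isOpen_Ioi.mem_nhds hy] with x hx
      rw [hΦ x]
      have e1 : (3:ℝ) * x ^ (2 - p) * (2 * (p * x ^ (p - 1) - 1)) = 6*(p*x - x^(2-p)) := by
        have e2 : x ^ (2-p) * x ^ (p-1) = x := by
          rw [← Real.rpow_add hx]
          norm_num
        nlinarith [e2]
      rw [e1]
    have h5 := h4.congr_of_eventuallyEq heq.symm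
    have he : 6*(p*1 - (2-p)*y^(2-p-1)) * (∫ t in (1:ℝ)..y, t ^ (p-2) * k t)
        + 6*(p*y - y^(2-p)) * (y ^ (p-2) * k y)
        - (2 * (y ^ p - y) * (2 * (y ^ p - y)) + k y * (2 * (p * y ^ (p-1) - 1)))
        = 6*(p + (p-2) * y^(1-p)) * (∫ t in (1:ℝ)..y, t ^ (p-2) * k t) + G y := by
      have e1 : (2:ℝ) - p - 1 = 1 - p := by ring
      have e2 : y ^ (2-p) * y ^ (p-2) = 1 := by
        rw [← Real.rpow_add hy]; norm_num
      have e3 : y * y ^ (p-2) = y ^ (p-1) := by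
        calc y * y ^ (p-2) = y ^ (1:ℝ) * y ^ (p-2) := by rw [Real.rpow_one]
        _ = y ^ (p-1) := by rw [← Real.rpow_add hy]; congr 1; ring
      rw [e1, hGdef]
      linear_combination (6 * p * k y) * e3 - (6 * k y) * e2
    rw [he] at h5
    exact h5
  -- sign of deriv Φ
  have hDpos : ∀ y : ℝ, 1 < y → 0 < deriv Φ y := by
    intro y hy
    have hy0 : (0:ℝ) < y := by linarith
    rw [(hΦD y hy0).deriv]
    have h1 := Real.rpow_pos_of_pos hy0 (1-p)
    have h2 : (0:ℝ) < 6*(p + (p-2) * y^(1-p)) := by nlinarith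
    have h3 := hIpos y hy
    have h4 := hGpos y hy
    nlinarith
  have hDneg : ∀ y : ℝ, 0 < y → y < 1 → deriv Φ y < 0 := by
    intro y hy0 hy1
    rw [(hΦD y hy0).deriv]
    have h1 := Real.rpow_pos_of_pos hy0 (1-p)
    have h2 : (0:ℝ) < 6*(p + (p-2) * y^(1-p)) := by nlinarith
    have h3 := hIneg y hy0 hy1
    have h4 := hGneg y hy0 hy1
    nlinarith
  -- Φ 1 = 0
  have hΦ1 : Φ 1 = 0 := by
    rw [hΦ 1]
    simp [hk1, intervalIntegral.integral_same]
  have hΦC : ContinuousOn Φ (Ioi 0) :=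
    fun x hx => ((hΦD x hx).continuousAt).continuousWithinAt
  refine ⟨hΦ1, fun y hy => hDpos y hy.1, fun y hy => hDneg y hy.1 hy.2, ?_⟩
  intro y hy hne
  rcases lt_or_gt_of_ne hne with h1 | h1
  · -- y < 1 : Φ strictly decreasing on [y,1]
    have hanti : StrictAntiOn Φ (Icc y 1) := by
      apply strictAntiOn_of_deriv_neg (convex_Icc y 1)
        (hΦC.mono (fun x hx => lt_of_lt_of_le hy.1 hx.1))
      intro x hx
      rw [interior_Icc] at hx
      exact hDneg x (lt_of_lt_of_le hy.1 hx.1.le) hx.2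
    have h2 := hanti ⟨le_refl y, h1.le⟩ ⟨h1.le, le_refl 1⟩ h1
    rwa [hΦ1] at h2
  · -- y > 1 : Φ strictly increasing on [1,y]
    have hmono : StrictMonoOn Φ (Icc 1 y) := by
      apply strictMonoOn_of_deriv_pos (convex_Icc 1 y)
        (hΦC.mono (fun x hx => lt_of_lt_of_le one_pos hx.1))
      intro x hx
      rw [interior_Icc] at hx
      exact hDpos x hx.1
    have h2 := hmono ⟨le_refl 1, h1.le⟩ ⟨h1.le, le_refl y⟩ h1
    rwa [hΦ1] at h2
end

section
/- For 1 < p < 2, with Φ(y) = 3 y^{2−p} k''(y) ∫₁^y t^{p-2} k(t) dt − k(y) k'(y), the identity (y^{p-2} Φ(y))' = 10 p(p−1) y^{p-2} ∫₁^y t^{p-2} k(t) dt + (2−p) y^{p-3} k(y) k'(y) holds for y > 0, and consequently Φ(y) > 0 for y ∈ (0, ((p+1)/2)^{1/(p-1)}] with y ≠ 1. -/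
open Real Set intervalIntegral MeasureTheory
set_option maxHeartbeats 2000000

noncomputable def Jfun (p : ℝ) (y : ℝ) : ℝ :=
  (y ^ (p-1) - 1) / (p-1) - (y ^ (p+1) - 1) / (p+1)
    + (2 / (p+1)) * ((y ^ (2*p) - 1) / (2*p) - (y ^ (p-1) - 1) / (p-1))

lemma integral_eq_Jfun (p : ℝ) (hp1 : 1 < p) (hp2 : p < 2) (y : ℝ) (hy : 0 < y) :
    (∫ t in (1:ℝ)..y, t ^ (p-2) * (1 - t ^ 2 + (2/(p+1)) * (t ^ (p+1) - 1))) = Jfun p y := by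
  have hmin : (0:ℝ) < min 1 y := lt_min one_pos hy
  have hcongr : EqOn (fun t : ℝ => t ^ (p-2) * (1 - t ^ 2 + (2/(p+1)) * (t ^ (p+1) - 1)))
      (fun t : ℝ => (1 - 2/(p+1)) * t ^ (p-2) - t ^ p + (2/(p+1)) * t ^ (2*p-1)) (uIcc 1 y) := by
    intro t ht
    have ht0 : 0 < t := lt_of_lt_of_le hmin ht.1
    have e1 : t ^ (p-2) * t ^ (2:ℕ) = t ^ p := by
      rw [← Real.rpow_natCast t 2, ← Real.rpow_add ht0]
      norm_num
    have e2 : t ^ (p-2) * t ^ (p+1) = t ^ (2*p-1) := by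
      rw [← Real.rpow_add ht0]
      ring_nf
    simp only
    linear_combination (2/(p+1)) * e2 - e1
  rw [intervalIntegral.integral_congr hcongr]
  have i1 : IntervalIntegrable (fun t : ℝ => t ^ (p-2)) volume 1 y :=
    intervalIntegrable_rpow' (by linarith)
  have i2 : IntervalIntegrable (fun t : ℝ => t ^ p) volume 1 y :=
    intervalIntegrable_rpow' (by linarith)
  have i3 : IntervalIntegrable (fun t : ℝ => t ^ (2*p-1)) volume 1 y :=
    intervalIntegrable_rpow' (by linarith)
  rw [intervalIntegral.integral_add ((i1.const_mul _).sub i2) (i3.const_mul _),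
      intervalIntegral.integral_sub (i1.const_mul _) i2,
      intervalIntegral.integral_const_mul, intervalIntegral.integral_const_mul,
      integral_rpow (Or.inl (by linarith)), integral_rpow (Or.inl (by linarith)),
      integral_rpow (Or.inl (by linarith))]
  rw [show p - 2 + 1 = p - 1 by ring, show 2*p - 1 + 1 = 2*p by ring]
  simp only [Real.one_rpow, Jfun]
  have h1 : p - 1 ≠ 0 := ne_of_gt (by linarith)
  have h2 : p + 1 ≠ 0 := ne_of_gt (by linarith)
  have h3 : 2*p ≠ 0 := ne_of_gt (by linarith)
  field_simp
  ring

lemma k_pos (p : ℝ) (hp1 : 1 < p) (y : ℝ) (hy : 0 < y) (hy1 : y ≠ 1) :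
    0 < 1 - y ^ 2 + (2/(p+1)) * (y ^ (p+1) - 1) := by
  set f : ℝ → ℝ := fun z => 1 - z ^ 2 + (2/(p+1)) * (z ^ (p+1) - 1) with hf
  have hp0 : p + 1 ≠ 0 := ne_of_gt (by linarith)
  have hd : ∀ z : ℝ, HasDerivAt f (2 * (z ^ p - z)) z := by
    intro z
    have h1 : HasDerivAt (fun w : ℝ => w ^ (p+1)) ((p+1) * z ^ p) z := by
      have := Real.hasDerivAt_rpow_const (x := z) (p := p + 1) (Or.inr (by linarith))
      rwa [show p + 1 - 1 = p by ring] at this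
    have h2 := ((hasDerivAt_pow 2 z).const_sub 1).add ((h1.sub_const 1).const_mul (2/(p+1)))
    refine h2.congr_deriv ?_
    field_simp
    ring
  have hcont : ∀ s : Set ℝ, ContinuousOn f s :=
    fun s x _ => (hd x).differentiableAt.continuousAt.continuousWithinAt
  have hf1 : f 1 = 0 := by simp [hf]
  rcases lt_or_gt_of_ne hy1 with h | h
  · have hanti : StrictAntiOn f (Icc y 1) := by
      apply strictAntiOn_of_deriv_neg (convex_Icc _ _) (hcont _)
      intro t ht
      rw [interior_Icc] at ht
      have ht0 : 0 < t := lt_trans hy ht.1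
      rw [(hd t).deriv]
      have : t ^ p < t := by
        have := Real.rpow_lt_rpow_of_exponent_gt ht0 ht.2 hp1
        rwa [Real.rpow_one] at this
      nlinarith
    have h2 := hanti (left_mem_Icc.mpr h.le) (right_mem_Icc.mpr h.le) h
    rw [hf1] at h2
    exact h2
  · have hmono : StrictMonoOn f (Icc 1 y) := by
      apply strictMonoOn_of_deriv_pos (convex_Icc _ _) (hcont _)
      intro t ht
      rw [interior_Icc] at ht
      have ht1 : 1 < t := ht.1
      rw [(hd t).deriv]
      have : t < t ^ p := by
        have := Real.rpow_lt_rpow_of_exponent_lt ht1 hp1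
        rwa [Real.rpow_one] at this
      nlinarith
    have h2 := hmono (left_mem_Icc.mpr h.le) (right_mem_Icc.mpr h.le) h
    rw [hf1] at h2
    exact h2

lemma hasDerivAt_main (p : ℝ) (hp1 : 1 < p) (hp2 : p < 2) (y : ℝ) (hy : 0 < y) :
    HasDerivAt (fun z : ℝ => z ^ (p-2) *
      (3 * z ^ (2-p) * (2 * (p * z ^ (p-1) - 1)) * Jfun p z
        - (1 - z ^ 2 + (2/(p+1)) * (z ^ (p+1) - 1)) * (2 * (z ^ p - z))))
      (10 * p * (p-1) * y ^ (p-2) * Jfun p y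
        + (2-p) * y ^ (p-3) * (1 - y ^ 2 + (2/(p+1)) * (y ^ (p+1) - 1)) * (2 * (y ^ p - y))) y := by
  have hy' : y ≠ 0 := hy.ne'
  have hr : ∀ r : ℝ, HasDerivAt (fun z : ℝ => z ^ r) (r * y ^ (r-1)) y :=
    fun r => Real.hasDerivAt_rpow_const (Or.inl hy')
  have hJ : HasDerivAt (fun z => Jfun p z)
      ((p-1) * y ^ (p-1-1) / (p-1) - (p+1) * y ^ (p+1-1) / (p+1)
        + (2/(p+1)) * ((2*p) * y ^ (2*p-1) / (2*p) - (p-1) * y ^ (p-1-1) / (p-1))) y := by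
    unfold Jfun
    exact ((((hr (p-1)).sub_const 1).div_const (p-1)).sub
      (((hr (p+1)).sub_const 1).div_const (p+1))).add
      (((((hr (2*p)).sub_const 1).div_const (2*p)).sub
        (((hr (p-1)).sub_const 1).div_const (p-1))).const_mul (2/(p+1)))
  have H := (hr (p-2)).mul
    (((((hr (2-p)).const_mul 3).mul ((((hr (p-1)).const_mul p).sub_const 1).const_mul 2)).mul hJ).sub
      ((((hasDerivAt_pow 2 y).const_sub 1).add
          (((hr (p+1)).sub_const 1).const_mul (2/(p+1)))).mul
        (((hr p).sub (hasDerivAt_id' (𝕜 := ℝ) y)).const_mul 2)))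
  refine H.congr_deriv ?_
  symm
  simp only [Jfun, Pi.mul_apply, Pi.add_apply, Pi.sub_apply]
  have key : ∀ q : ℝ, y ^ (q+1) = y ^ q * y := fun q => by
    rw [Real.rpow_add hy, Real.rpow_one]
  have E1 : y ^ (p-2) = y ^ (p-3) * y := by
    rw [show p-2 = p-3+1 by ring, key]
  have E2 : y ^ (p-1) = y ^ (p-3) * y * y := by
    have e : y ^ (p-1) = y ^ (p-3+1+1) := by congr 1; ring
    rw [e, key, key]
  have E3 : y ^ p = y ^ (p-3) * y * y * y := by
    have e : y ^ p = y ^ (p-3+1+1+1) := by congr 1; ring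
    rw [e, key, key, key]
  have E4 : y ^ (p+1) = y ^ (p-3) * y * y * y * y := by
    have e : y ^ (p+1) = y ^ (p-3+1+1+1+1) := by congr 1; ring
    rw [e, key, key, key, key]
  have E5 : y ^ (2*p) = y ^ (p-3) * y ^ (p-3) * y * y * y * y * y * y := by
    have e : y ^ (2*p) = y ^ ((p-3)+(p-3)+1+1+1+1+1+1) := by congr 1; ring
    rw [e, key, key, key, key, key, key, Real.rpow_add hy]
  have E6 : y ^ (2*p-1) = y ^ (p-3) * y ^ (p-3) * y * y * y * y * y := by
    have e : y ^ (2*p-1) = y ^ ((p-3)+(p-3)+1+1+1+1+1) := by congr 1; ring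
    rw [e, key, key, key, key, key, Real.rpow_add hy]
  rw [show p-1-1 = p-2 by ring, show p+1-1 = p by ring, show p-2-1 = p-3 by ring,
      show (2:ℝ)-p-1 = -(p-1) by ring, show (2:ℝ)-p = -(p-2) by ring,
      Real.rpow_neg hy.le (p-1), Real.rpow_neg hy.le (p-2)]
  rw [E6, E5, E4, E3, E2, E1]
  have ha0 : (0:ℝ) < y ^ (p-3) := Real.rpow_pos_of_pos hy _
  have h1 : p - 1 ≠ 0 := ne_of_gt (by linarith)
  have h2 : p + 1 ≠ 0 := ne_of_gt (by linarith)
  have h3 : 2*p ≠ 0 := ne_of_gt (by linarith)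
  field_simp
  ring

theorem Phi_positive_p_lt_two (p : ℝ) (hp1 : 1 < p) (hp2 : p < 2)
    (k Φ : ℝ → ℝ)
    (hk : ∀ y : ℝ, k y = 1 - y ^ 2 + (2 / (p + 1)) * (y ^ (p + 1) - 1))
    (hΦ : ∀ y : ℝ, Φ y =
      3 * y ^ (2 - p) * (2 * (p * y ^ (p - 1) - 1)) * (∫ t in (1 : ℝ)..y, t ^ (p - 2) * k t)
        - k y * (2 * (y ^ p - y))) :
    (∀ y : ℝ, 0 < y →
      HasDerivAt (fun z : ℝ => z ^ (p - 2) * Φ z)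
        (10 * p * (p - 1) * y ^ (p - 2) * (∫ t in (1 : ℝ)..y, t ^ (p - 2) * k t)
          + (2 - p) * y ^ (p - 3) * k y * (2 * (y ^ p - y))) y) ∧
    (∀ y ∈ Ioc (0 : ℝ) (((p + 1) / 2) ^ (1 / (p - 1))), y ≠ 1 → 0 < Φ y) := by
  have hIJ : ∀ y : ℝ, 0 < y → (∫ t in (1:ℝ)..y, t ^ (p-2) * k t) = Jfun p y := by
    intro y hy
    simp only [hk]
    exact integral_eq_Jfun p hp1 hp2 y hy
  have hderiv : ∀ y : ℝ, 0 < y →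
      HasDerivAt (fun z : ℝ => z ^ (p - 2) * Φ z)
        (10 * p * (p - 1) * y ^ (p - 2) * (∫ t in (1 : ℝ)..y, t ^ (p - 2) * k t)
          + (2 - p) * y ^ (p - 3) * k y * (2 * (y ^ p - y))) y := by
    intro y hy
    have hmain := hasDerivAt_main p hp1 hp2 y hy
    have hEq : (fun z : ℝ => z ^ (p-2) * Φ z) =ᶠ[nhds y]
        (fun z : ℝ => z ^ (p-2) *
          (3 * z ^ (2-p) * (2 * (p * z ^ (p-1) - 1)) * Jfun p z
            - (1 - z ^ 2 + (2/(p+1)) * (z ^ (p+1) - 1)) * (2 * (z ^ p - z)))) := by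
      filter_upwards [isOpen_Ioi.mem_nhds (show y ∈ Ioi (0:ℝ) from hy)] with z hz
      rw [hΦ z, hk z, hIJ z hz]
    rw [hIJ y hy, hk y]
    exact hmain.congr_of_eventuallyEq hEq
  refine ⟨hderiv, ?_⟩
  intro y hy hy1
  obtain ⟨hy0, _⟩ := hy
  set G : ℝ → ℝ := fun z => z ^ (p-2) * Φ z with hG
  have hG1 : G 1 = 0 := by
    have h1 : Φ 1 = 0 := by
      rw [hΦ 1]
      simp [hk, Real.one_rpow, intervalIntegral.integral_same]
    simp [hG, h1]
  have hkcont : Continuous k := by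
    have : k = fun z => 1 - z ^ 2 + (2/(p+1)) * (z ^ (p+1) - 1) := funext hk
    rw [this]
    have : Continuous (fun z : ℝ => z ^ (p+1)) := by
      rw [continuous_iff_continuousAt]
      exact fun x => Real.continuousAt_rpow_const x (p+1) (Or.inr (by linarith))
    continuity
  have hint : ∀ a b : ℝ, 0 < a → 0 < b →
      IntervalIntegrable (fun s : ℝ => s ^ (p-2) * k s) volume a b := by
    intro a b ha hb
    apply ContinuousOn.intervalIntegrable
    apply ContinuousOn.mul
    · intro s hs
      have hs0 : 0 < s := lt_of_lt_of_le (lt_min ha hb) hs.1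
      exact (Real.continuousAt_rpow_const s (p-2) (Or.inl hs0.ne')).continuousWithinAt
    · exact hkcont.continuousOn
  have hGcont : ∀ s : Set ℝ, s ⊆ Ioi 0 → ContinuousOn G s := by
    intro s hs x hx
    exact (hderiv x (hs hx)).differentiableAt.continuousAt.continuousWithinAt
  have hΦpos_of_G : 0 < G y → 0 < Φ y := by
    intro h
    have hyp2 : 0 < y ^ (p-2) := Real.rpow_pos_of_pos hy0 _
    by_contra hc
    push_neg at hc
    have : y ^ (p-2) * Φ y ≤ 0 := mul_nonpos_of_nonneg_of_nonpos hyp2.le hc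
    simp only [hG] at h
    linarith
  rcases lt_or_gt_of_ne hy1 with hlt | hgt
  · -- y < 1
    have hanti : StrictAntiOn G (Icc y 1) := by
      apply strictAntiOn_of_deriv_neg (convex_Icc _ _)
        (hGcont _ (fun x hx => lt_of_lt_of_le hy0 hx.1))
      intro t ht
      rw [interior_Icc] at ht
      have ht0 : 0 < t := lt_trans hy0 ht.1
      rw [(hderiv t ht0).deriv]
      have hI : (∫ s in (1:ℝ)..t, s ^ (p-2) * k s) < 0 := by
        rw [intervalIntegral.integral_symm]
        have hpos : (0:ℝ) < ∫ s in t..(1:ℝ), s ^ (p-2) * k s := by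
          apply intervalIntegral_pos_of_pos_on (hint t 1 ht0 one_pos)
          · intro x hx
            have hx0 : 0 < x := lt_trans ht0 hx.1
            have hkx : 0 < k x := by
              rw [hk x]; exact k_pos p hp1 x hx0 (ne_of_lt hx.2)
            exact mul_pos (Real.rpow_pos_of_pos hx0 _) hkx
          · exact ht.2
        linarith
      have hkt : 0 < k t := by
        rw [hk t]; exact k_pos p hp1 t ht0 (ne_of_lt ht.2)
      have hks : t ^ p < t := by
        have := Real.rpow_lt_rpow_of_exponent_gt ht0 ht.2 hp1
        rwa [Real.rpow_one] at this
      have hA : 0 < 10 * p * (p-1) * t ^ (p-2) :=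
        mul_pos (mul_pos (mul_pos (by norm_num) (by linarith)) (by linarith))
          (Real.rpow_pos_of_pos ht0 _)
      have hB : 0 < (2-p) * t ^ (p-3) * k t :=
        mul_pos (mul_pos (by linarith) (Real.rpow_pos_of_pos ht0 _)) hkt
      have h1 := mul_neg_of_pos_of_neg hA hI
      have h2 := mul_neg_of_pos_of_neg hB (show 2 * (t ^ p - t) < 0 by linarith)
      linarith
    have h2 := hanti (left_mem_Icc.mpr hlt.le) (right_mem_Icc.mpr hlt.le) hlt
    rw [hG1] at h2
    exact hΦpos_of_G h2
  · -- y > 1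
    have hmono : StrictMonoOn G (Icc 1 y) := by
      apply strictMonoOn_of_deriv_pos (convex_Icc _ _)
        (hGcont _ (fun x hx => lt_of_lt_of_le one_pos hx.1))
      intro t ht
      rw [interior_Icc] at ht
      have ht1 : 1 < t := ht.1
      have ht0 : 0 < t := lt_trans one_pos ht1
      rw [(hderiv t ht0).deriv]
      have hI : (0:ℝ) < ∫ s in (1:ℝ)..t, s ^ (p-2) * k s := by
        apply intervalIntegral_pos_of_pos_on (hint 1 t one_pos ht0)
        · intro x hx
          have hx0 : 0 < x := lt_trans one_pos hx.1
          have hkx : 0 < k x := by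
            rw [hk x]; exact k_pos p hp1 x hx0 (ne_of_gt hx.1)
          exact mul_pos (Real.rpow_pos_of_pos hx0 _) hkx
        · exact ht1
      have hkt : 0 < k t := by
        rw [hk t]; exact k_pos p hp1 t ht0 (ne_of_gt ht1)
      have hks : t < t ^ p := by
        have := Real.rpow_lt_rpow_of_exponent_lt ht1 hp1
        rwa [Real.rpow_one] at this
      have hA : 0 < 10 * p * (p-1) * t ^ (p-2) :=
        mul_pos (mul_pos (mul_pos (by norm_num) (by linarith)) (by linarith))
          (Real.rpow_pos_of_pos ht0 _)
      have hB : 0 < (2-p) * t ^ (p-3) * k t :=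
        mul_pos (mul_pos (by linarith) (Real.rpow_pos_of_pos ht0 _)) hkt
      have h1 := mul_pos hA hI
      have h2 := mul_pos hB (show 0 < 2 * (t ^ p - t) by linarith)
      linarith
    have h2 := hmono (left_mem_Icc.mpr hgt.le) (right_mem_Icc.mpr hgt.le) hgt
    rw [hG1] at h2
    exact hΦpos_of_G h2
end

section
/- With k and Φ as above, Φ(y)/(k'(y))⁴ → (p+3)/(48(p−1)²) as y → 1. -/
open Real Set Filter intervalIntegral

theorem rpow_sub_taylor3_div (b : ℝ) :
    Tendsto (fun y : ℝ => (y ^ b - (1 + b*(y-1) + b*(b-1)/2*(y-1)^2 + b*(b-1)*(b-2)/6*(y-1)^3))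
        / (y-1)^4) (nhdsWithin 1 {(1:ℝ)}ᶜ) (nhds (b*(b-1)*(b-2)*(b-3)/24)) := by
  have hpos : ∀ᶠ y : ℝ in nhdsWithin 1 {(1:ℝ)}ᶜ, (0:ℝ) < y :=
    eventually_nhdsWithin_of_eventually_nhds (eventually_gt_nhds one_pos)
  have hne1 : ∀ᶠ y : ℝ in nhdsWithin 1 {(1:ℝ)}ᶜ, y ≠ 1 := eventually_mem_nhdsWithin
  -- level 3 limit
  have h3 : Tendsto (fun y : ℝ =>
      (b*(b-1)*(b-2)*y^(b-3) - b*(b-1)*(b-2)) / (24*(y-1)))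
      (nhdsWithin 1 {(1:ℝ)}ᶜ) (nhds (b*(b-1)*(b-2)*(b-3)/24)) := by
    have hd : HasDerivAt (fun x : ℝ => x ^ (b-3)) ((b-3) * 1 ^ (b-3-1)) 1 :=
      Real.hasDerivAt_rpow_const (Or.inl one_ne_zero)
    have hs := hasDerivAt_iff_tendsto_slope.mp hd
    rw [Real.one_rpow, mul_one] at hs
    have hs' : Tendsto (fun y : ℝ => (y^(b-3) - 1) / (y - 1))
        (nhdsWithin 1 {(1:ℝ)}ᶜ) (nhds (b-3)) := by
      refine hs.congr fun y => ?_
      rw [slope_def_field, Real.one_rpow]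
    have h := hs'.const_mul (b*(b-1)*(b-2)/24)
    have heq : b*(b-1)*(b-2)/24 * (b-3) = b*(b-1)*(b-2)*(b-3)/24 := by ring
    rw [heq] at h
    refine h.congr fun y => ?_
    rw [div_mul_div_comm]
    ring_nf
  -- level 2
  have h2 : Tendsto (fun y : ℝ =>
      (b*(b-1)*y^(b-2) - (b*(b-1) + b*(b-1)*(b-2)*(y-1))) / (12*(y-1)^2))
      (nhdsWithin 1 {(1:ℝ)}ᶜ) (nhds (b*(b-1)*(b-2)*(b-3)/24)) := by
    apply HasDerivAt.lhopital_zero_nhdsNE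
      (f' := fun y : ℝ => b*(b-1)*(b-2)*y^(b-3) - b*(b-1)*(b-2))
      (g' := fun y : ℝ => 24*(y-1))
    · filter_upwards [hpos] with y hy
      have hr : HasDerivAt (fun x : ℝ => x ^ (b-2)) ((b-2) * y^(b-2-1)) y :=
        Real.hasDerivAt_rpow_const (Or.inl hy.ne')
      have hq : HasDerivAt (fun y : ℝ => b*(b-1) + b*(b-1)*(b-2)*(y-1)) (b*(b-1)*(b-2)) y :=
        (((hasDerivAt_id y).sub_const 1).const_mul (b*(b-1)*(b-2))).const_add (b*(b-1))
          |>.congr_deriv (by simp)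
      refine ((hr.const_mul (b*(b-1))).sub hq).congr_deriv ?_
      rw [show b-2-1 = b-3 by ring]; ring
    · filter_upwards with y
      have h := (((hasDerivAt_id y).sub_const 1).pow 2).const_mul (12:ℝ)
      refine h.congr_deriv ?_
      (try simp only [id_eq]); push_cast; ring
    · filter_upwards [hne1] with y hy
      have h1 : y - 1 ≠ 0 := sub_ne_zero.mpr hy
      intro hcon
      apply h1
      have := mul_eq_zero.mp hcon
      rcases this with h | h
      · norm_num at h
      · exact h
    · have hc : ContinuousAt (fun y : ℝ =>
          b*(b-1)*y^(b-2) - (b*(b-1) + b*(b-1)*(b-2)*(y-1))) 1 := by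
        have h1 : ContinuousAt (fun y : ℝ => y ^ (b-2)) 1 :=
          (Real.continuousAt_rpow_const 1 (b-2) (Or.inl one_ne_zero))
        exact ((h1.const_smul (b*(b-1))).sub (by fun_prop))
      have h0 := hc.tendsto.mono_left (nhdsWithin_le_nhds (s := {(1:ℝ)}ᶜ))
      simpa [Real.one_rpow] using h0
    · have hc : ContinuousAt (fun y : ℝ => 12*(y-1)^2) 1 := by fun_prop
      have h0 := hc.tendsto.mono_left (nhdsWithin_le_nhds (s := {(1:ℝ)}ᶜ))
      simpa using h0
    · exact h3
  -- level 1
  have h1 : Tendsto (fun y : ℝ =>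
      (b*y^(b-1) - (b + b*(b-1)*(y-1) + b*(b-1)*(b-2)/2*(y-1)^2)) / (4*(y-1)^3))
      (nhdsWithin 1 {(1:ℝ)}ᶜ) (nhds (b*(b-1)*(b-2)*(b-3)/24)) := by
    apply HasDerivAt.lhopital_zero_nhdsNE
      (f' := fun y : ℝ => b*(b-1)*y^(b-2) - (b*(b-1) + b*(b-1)*(b-2)*(y-1)))
      (g' := fun y : ℝ => 12*(y-1)^2)
    · filter_upwards [hpos] with y hy
      have hr : HasDerivAt (fun x : ℝ => x ^ (b-1)) ((b-1) * y^(b-1-1)) y :=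
        Real.hasDerivAt_rpow_const (Or.inl hy.ne')
      have hq : HasDerivAt (fun y : ℝ => b + b*(b-1)*(y-1) + b*(b-1)*(b-2)/2*(y-1)^2)
          (b*(b-1)*1 + b*(b-1)*(b-2)/2*((2:ℕ)*(y-1)^1*1)) y :=
        (((((hasDerivAt_id y).sub_const 1).const_mul (b*(b-1))).const_add b)).add
          ((((hasDerivAt_id y).sub_const 1).pow 2).const_mul (b*(b-1)*(b-2)/2))
      refine ((hr.const_mul b).sub hq).congr_deriv ?_
      rw [show b-1-1 = b-2 by ring]; (try simp only [id_eq]); push_cast; ring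
    · filter_upwards with y
      have h := (((hasDerivAt_id y).sub_const 1).pow 3).const_mul (4:ℝ)
      refine h.congr_deriv ?_
      (try simp only [id_eq]); push_cast; ring
    · filter_upwards [hne1] with y hy
      have h1 : y - 1 ≠ 0 := sub_ne_zero.mpr hy
      intro hcon
      rcases mul_eq_zero.mp hcon with h | h
      · norm_num at h
      · exact h1 (pow_eq_zero_iff (by norm_num) |>.mp h)
    · have hc : ContinuousAt (fun y : ℝ =>
          b*y^(b-1) - (b + b*(b-1)*(y-1) + b*(b-1)*(b-2)/2*(y-1)^2)) 1 := by
        have hcr : ContinuousAt (fun y : ℝ => y ^ (b-1)) 1 :=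
          (Real.continuousAt_rpow_const 1 (b-1) (Or.inl one_ne_zero))
        exact ((hcr.const_smul b).sub (by fun_prop))
      have h0 := hc.tendsto.mono_left (nhdsWithin_le_nhds (s := {(1:ℝ)}ᶜ))
      simpa [Real.one_rpow] using h0
    · have hc : ContinuousAt (fun y : ℝ => 4*(y-1)^3) 1 := by fun_prop
      have h0 := hc.tendsto.mono_left (nhdsWithin_le_nhds (s := {(1:ℝ)}ᶜ))
      simpa using h0
    · exact h2
  -- level 0
  apply HasDerivAt.lhopital_zero_nhdsNE
    (f' := fun y : ℝ => b*y^(b-1) - (b + b*(b-1)*(y-1) + b*(b-1)*(b-2)/2*(y-1)^2))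
    (g' := fun y : ℝ => 4*(y-1)^3)
  · filter_upwards [hpos] with y hy
    have hr : HasDerivAt (fun x : ℝ => x ^ b) (b * y^(b-1)) y :=
      Real.hasDerivAt_rpow_const (Or.inl hy.ne')
    have hq : HasDerivAt
        (fun y : ℝ => 1 + b*(y-1) + b*(b-1)/2*(y-1)^2 + b*(b-1)*(b-2)/6*(y-1)^3)
        (b*1 + b*(b-1)/2*((2:ℕ)*(y-1)^1*1) + b*(b-1)*(b-2)/6*((3:ℕ)*(y-1)^2*1)) y :=
      ((((((hasDerivAt_id y).sub_const 1).const_mul b).const_add 1)).add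
        ((((hasDerivAt_id y).sub_const 1).pow 2).const_mul (b*(b-1)/2))).add
        ((((hasDerivAt_id y).sub_const 1).pow 3).const_mul (b*(b-1)*(b-2)/6))
    refine (hr.sub hq).congr_deriv ?_
    (try simp only [id_eq]); push_cast; ring
  · filter_upwards with y
    have h := ((hasDerivAt_id y).sub_const 1).pow 4
    refine h.congr_deriv ?_
    (try simp only [id_eq]); push_cast; ring
  · filter_upwards [hne1] with y hy
    have h1 : y - 1 ≠ 0 := sub_ne_zero.mpr hy
    intro hcon
    rcases mul_eq_zero.mp hcon with h | h
    · norm_num at h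
    · exact h1 (pow_eq_zero_iff (by norm_num) |>.mp h)
  · have hc : ContinuousAt (fun y : ℝ =>
        y^b - (1 + b*(y-1) + b*(b-1)/2*(y-1)^2 + b*(b-1)*(b-2)/6*(y-1)^3)) 1 := by
      have hcr : ContinuousAt (fun y : ℝ => y ^ b) 1 :=
        (Real.continuousAt_rpow_const 1 b (Or.inl one_ne_zero))
      exact (hcr.sub (by fun_prop))
    have h0 := hc.tendsto.mono_left (nhdsWithin_le_nhds (s := {(1:ℝ)}ᶜ))
    simpa [Real.one_rpow] using h0
  · have hc : ContinuousAt (fun y : ℝ => (y-1)^4) 1 := by fun_prop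
    have h0 := hc.tendsto.mono_left (nhdsWithin_le_nhds (s := {(1:ℝ)}ᶜ))
    simpa using h0
  · exact h1


noncomputable def tay3 (b y : ℝ) : ℝ :=
  1 + b*(y-1) + b*(b-1)/2*(y-1)^2 + b*(b-1)*(b-2)/6*(y-1)^3

theorem tay3_tendsto (b : ℝ) :
    Tendsto (fun y : ℝ => (y ^ b - tay3 b y) / (y-1)^4)
      (nhdsWithin 1 {(1:ℝ)}ᶜ) (nhds (b*(b-1)*(b-2)*(b-3)/24)) := by
  simpa only [tay3] using rpow_sub_taylor3_div b

theorem Phi_over_k'_fourth_limit (p : ℝ) (hp : 1 < p)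
    (k Φ : ℝ → ℝ)
    (hk : ∀ y : ℝ, k y = 1 - y ^ 2 + (2 / (p + 1)) * (y ^ (p + 1) - 1))
    (hΦ : ∀ y : ℝ, Φ y =
      3 * y ^ (2 - p) * (2 * (p * y ^ (p - 1) - 1)) * (∫ t in (1 : ℝ)..y, t ^ (p - 2) * k t)
        - k y * (2 * (y ^ p - y))) :
    Tendsto (fun y : ℝ => Φ y / (2 * (y ^ p - y)) ^ 4)
      (nhdsWithin 1 {(1 : ℝ)}ᶜ) (nhds ((p + 3) / (48 * (p - 1) ^ 2))) := by
  have hp0 : p ≠ 0 := ne_of_gt (by linarith)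
  have hp1 : p + 1 ≠ 0 := ne_of_gt (by linarith)
  have hpm1 : p - 1 ≠ 0 := sub_ne_zero.mpr (ne_of_gt hp)
  have hpos : ∀ᶠ y : ℝ in nhdsWithin 1 {(1:ℝ)}ᶜ, (0:ℝ) < y :=
    eventually_nhdsWithin_of_eventually_nhds (eventually_gt_nhds one_pos)
  have hne1 : ∀ᶠ y : ℝ in nhdsWithin 1 {(1:ℝ)}ᶜ, y ≠ 1 := eventually_mem_nhdsWithin
  -- the integral, computed
  have hint : ∀ y : ℝ, 0 < y → (∫ t in (1 : ℝ)..y, t ^ (p - 2) * k t) =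
      (y^(p-1)-1)/(p+1) - (y^(p+1)-1)/(p+1) + (y^(2*p)-1)/(p*(p+1)) := by
    intro y hy
    have hcong : EqOn (fun t : ℝ => t ^ (p-2) * k t)
        (fun t : ℝ => (p-1)/(p+1) * t^(p-2) - t^p + 2/(p+1) * t^(2*p-1)) (uIcc 1 y) := by
      intro t ht
      have ht0 : 0 < t := lt_of_lt_of_le (lt_min one_pos hy) (ht.1)
      have ep : t ^ p = t ^ (p-2) * t * t := by
        conv_lhs => rw [show p = p-2+1+1 by ring]
        rw [Real.rpow_add_one ht0.ne', Real.rpow_add_one ht0.ne']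
      have e21 : t ^ (2*p-1) = t ^ (p-2) * t ^ (p+1) := by
        rw [← Real.rpow_add ht0, show p-2+(p+1) = 2*p-1 by ring]
      simp only
      rw [hk t, pow_two, ep, e21]
      field_simp
      ring
    rw [intervalIntegral.integral_congr hcong]
    have i1 : IntervalIntegrable (fun t : ℝ => t ^ (p-2)) MeasureTheory.volume 1 y :=
      intervalIntegral.intervalIntegrable_rpow' (by linarith)
    have i2 : IntervalIntegrable (fun t : ℝ => t ^ p) MeasureTheory.volume 1 y :=
      intervalIntegral.intervalIntegrable_rpow' (by linarith)
    have i3 : IntervalIntegrable (fun t : ℝ => t ^ (2*p-1)) MeasureTheory.volume 1 y :=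
      intervalIntegral.intervalIntegrable_rpow' (by linarith)
    rw [intervalIntegral.integral_add ((i1.const_mul _).sub i2) (i3.const_mul _),
      intervalIntegral.integral_sub (i1.const_mul _) i2,
      intervalIntegral.integral_const_mul, intervalIntegral.integral_const_mul,
      integral_rpow (Or.inl (by linarith : (-1:ℝ) < p-2)),
      integral_rpow (Or.inl (by linarith : (-1:ℝ) < p)),
      integral_rpow (Or.inl (by linarith : (-1:ℝ) < 2*p-1)),
      show p-2+1 = p-1 by ring, show 2*p-1+1 = 2*p by ring, Real.one_rpow, Real.one_rpow,
      Real.one_rpow]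
    field_simp
  -- Φ as a combination of centered rpow terms
  have hPhiN : ∀ y : ℝ, 0 < y → Φ y =
      (4*p+2)/(p+1) * (y^p - tay3 p y)
      + (-4*p^2+6*p-6)/(p*(p+1)) * (y^(p+2) - tay3 (p+2) y)
      + 2/(p+1) * (y^(2*p+1) - tay3 (2*p+1) y)
      + (2*p-14)/(p+1) * (y^((1:ℝ)) - tay3 1 y)
      + (4-2*p)/(p+1) * (y^((3:ℝ)) - tay3 3 y)
      + 6/(p*(p+1)) * (y^(2-p) - tay3 (2-p) y) := by
    intro y hy
    have hA : y ^ p ≠ 0 := (Real.rpow_pos_of_pos hy p).ne'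
    have e_pm1 : y^(p-1) = y^p/y := by rw [Real.rpow_sub hy, Real.rpow_one]
    have e_pp1 : y^(p+1) = y^p*y := by rw [Real.rpow_add_one hy.ne']
    have e_2p : y^(2*p) = y^p*y^p := by rw [two_mul, Real.rpow_add hy]
    have e_2p1 : y^(2*p+1) = y^p*y^p*y := by rw [Real.rpow_add_one hy.ne', e_2p]
    have e_pp2 : y^(p+2) = y^p*y*y := by
      rw [show p+2 = p+1+1 by ring, Real.rpow_add_one hy.ne', Real.rpow_add_one hy.ne']
    have e_2mp : y^(2-p) = y*y/y^p := by
      rw [Real.rpow_sub hy, show (2:ℝ) = 1+1 by norm_num, Real.rpow_add_one hy.ne',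
        Real.rpow_one]
    have e_3 : y^((3:ℝ)) = y*y*y := by
      rw [show (3:ℝ) = 1+1+1 by norm_num, Real.rpow_add_one hy.ne',
        Real.rpow_add_one hy.ne', Real.rpow_one]
    rw [hΦ y, hint y hy, hk y, e_pm1, e_pp1, e_2p1, e_pp2, e_2mp, e_3, e_2p, Real.rpow_one]
    simp only [tay3]
    field_simp
    ring
  -- limit of the centered sum over (y-1)^4
  have hN : Tendsto (fun y : ℝ =>
      ((4*p+2)/(p+1) * (y^p - tay3 p y)
      + (-4*p^2+6*p-6)/(p*(p+1)) * (y^(p+2) - tay3 (p+2) y)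
      + 2/(p+1) * (y^(2*p+1) - tay3 (2*p+1) y)
      + (2*p-14)/(p+1) * (y^((1:ℝ)) - tay3 1 y)
      + (4-2*p)/(p+1) * (y^((3:ℝ)) - tay3 3 y)
      + 6/(p*(p+1)) * (y^(2-p) - tay3 (2-p) y)) / (y-1)^4)
      (nhdsWithin 1 {(1:ℝ)}ᶜ)
      (nhds ((4*p+2)/(p+1) * (p*(p-1)*(p-2)*(p-3)/24)
      + (-4*p^2+6*p-6)/(p*(p+1)) * ((p+2)*(p+2-1)*(p+2-2)*(p+2-3)/24)
      + 2/(p+1) * ((2*p+1)*(2*p+1-1)*(2*p+1-2)*(2*p+1-3)/24)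
      + (2*p-14)/(p+1) * (1*(1-1)*(1-2)*(1-3)/24)
      + (4-2*p)/(p+1) * (3*(3-1)*(3-2)*(3-3)/24)
      + 6/(p*(p+1)) * ((2-p)*(2-p-1)*(2-p-2)*(2-p-3)/24))) := by
    have h1 := (tay3_tendsto p).const_mul ((4*p+2)/(p+1))
    have h2 := (tay3_tendsto (p+2)).const_mul ((-4*p^2+6*p-6)/(p*(p+1)))
    have h3 := (tay3_tendsto (2*p+1)).const_mul (2/(p+1))
    have h4 := (tay3_tendsto 1).const_mul ((2*p-14)/(p+1))
    have h5 := (tay3_tendsto 3).const_mul ((4-2*p)/(p+1))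
    have h6 := (tay3_tendsto (2-p)).const_mul (6/(p*(p+1)))
    have h := ((((h1.add h2).add h3).add h4).add h5).add h6
    refine h.congr fun y => ?_
    ring
  -- limit of ((y-1)/(2 (y^p - y)))^4
  have hden : Tendsto (fun y : ℝ => ((y-1)/(2*(y^p - y)))^4)
      (nhdsWithin 1 {(1:ℝ)}ᶜ) (nhds (((2*(p-1))⁻¹)^4)) := by
    have hr : HasDerivAt (fun x : ℝ => x ^ p) (p * (1:ℝ)^(p-1)) 1 :=
      Real.hasDerivAt_rpow_const (Or.inl one_ne_zero)
    have hd : HasDerivAt (fun y : ℝ => 2*(y^p - y)) (2*(p-1)) 1 := by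
      have h := (hr.sub (hasDerivAt_id 1)).const_mul (2:ℝ)
      refine h.congr_deriv ?_
      rw [Real.one_rpow]
      simp
    have hs := hasDerivAt_iff_tendsto_slope.mp hd
    have hs' : Tendsto (fun y : ℝ => 2*(y^p - y)/(y-1))
        (nhdsWithin 1 {(1:ℝ)}ᶜ) (nhds (2*(p-1))) := by
      refine hs.congr fun y => ?_
      rw [slope_def_field]
      simp [Real.one_rpow]
    have hinv := hs'.inv₀ (mul_ne_zero two_ne_zero hpm1)
    exact (hinv.congr fun y => inv_div _ _).pow 4
  have hmul := hN.mul hden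
  rw [show ((4*p+2)/(p+1) * (p*(p-1)*(p-2)*(p-3)/24)
      + (-4*p^2+6*p-6)/(p*(p+1)) * ((p+2)*(p+2-1)*(p+2-2)*(p+2-3)/24)
      + 2/(p+1) * ((2*p+1)*(2*p+1-1)*(2*p+1-2)*(2*p+1-3)/24)
      + (2*p-14)/(p+1) * (1*(1-1)*(1-2)*(1-3)/24)
      + (4-2*p)/(p+1) * (3*(3-1)*(3-2)*(3-3)/24)
      + 6/(p*(p+1)) * ((2-p)*(2-p-1)*(2-p-2)*(2-p-3)/24)) * (((2*(p-1))⁻¹)^4)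
      = (p + 3) / (48 * (p - 1) ^ 2) by field_simp; ring] at hmul
  refine Tendsto.congr' ?_ hmul
  filter_upwards [hpos, hne1] with y hy0 hy1
  have he : y - 1 ≠ 0 := sub_ne_zero.mpr hy1
  have key : ∀ N D e : ℝ, e ≠ 0 → N/e^4 * (e/D)^4 = N/D^4 := by
    intro N D e hee
    rw [div_pow, div_mul_div_comm, mul_comm N (e^4), mul_div_mul_left _ _ (pow_ne_zero 4 hee)]
  rw [hPhiN y hy0]
  exact (key _ _ _ he)
end

section
/- Let a(ξ) = −ξ² + (2/(p+1)) ξ^{p+1} on [1, ((p+1)/2)^{1/(p-1)}]. Then a is strictly increasing, maps this interval onto [(1−p)/(1+p), 0], and the inverse a^{-1} : [(1−p)/(1+p), 0] → [1, ((p+1)/2)^{1/(p-1)}] is ½-Hölder continuous: there is a constant C > 0 with |a^{-1}(c₁) − a^{-1}(c₂)| ≤ C √|c₁ − c₂| for all c₁, c₂ in [(1−p)/(1+p), 0]. -/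
open Real Set

theorem a_inverse_holder (p : ℝ) (hp : 1 < p)
    (a : ℝ → ℝ) (ha : ∀ ξ : ℝ, a ξ = -ξ ^ 2 + (2 / (p + 1)) * ξ ^ (p + 1)) :
    StrictMonoOn a (Icc (1 : ℝ) (((p + 1) / 2) ^ (1 / (p - 1)))) ∧
    a '' Icc (1 : ℝ) (((p + 1) / 2) ^ (1 / (p - 1))) = Icc ((1 - p) / (1 + p)) 0 ∧
    ∃ C : ℝ, 0 < C ∧
      ∀ ξ₁ ∈ Icc (1 : ℝ) (((p + 1) / 2) ^ (1 / (p - 1))),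
      ∀ ξ₂ ∈ Icc (1 : ℝ) (((p + 1) / 2) ^ (1 / (p - 1))),
        |ξ₁ - ξ₂| ≤ C * Real.sqrt |a ξ₁ - a ξ₂| := by
  set b := ((p + 1) / 2) ^ (1 / (p - 1)) with hbdef
  have hp1 : (0:ℝ) < p - 1 := by linarith
  have hp2 : (0:ℝ) < p + 1 := by linarith
  have hb1 : 1 < b := by
    rw [hbdef, Real.one_lt_rpow_iff_of_pos (by positivity)]
    exact Or.inl ⟨by linarith, by positivity⟩
  have hb0 : (0:ℝ) < b := by linarith
  -- continuity of the rpow part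
  have hca : ContinuousOn (fun ξ : ℝ => ξ ^ (p + 1)) (Icc 1 b) := fun x hx =>
    (Real.continuousAt_rpow_const x (p + 1)
      (Or.inl (by have := hx.1; intro h; rw [h] at this; linarith))).continuousWithinAt
  -- monotonicity of the auxiliary function g
  set g : ℝ → ℝ := fun ξ => -ξ ^ 2 + (2 / (p + 1)) * ξ ^ (p + 1) - (p - 1) * (ξ - 1) ^ 2
    with hgdef
  have hder : ∀ x ∈ Ioo (1:ℝ) b,
      HasDerivAt g (2 * x ^ p - 2 * x - 2 * (p - 1) * (x - 1)) x := by
    intro x hx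
    have hx0 : (0:ℝ) < x := by linarith [hx.1]
    have h1 : HasDerivAt (fun ξ : ℝ => ξ ^ 2) (2 * x) x := by
      simpa using hasDerivAt_pow 2 x
    have h2 : HasDerivAt (fun ξ : ℝ => ξ ^ (p + 1)) ((p + 1) * x ^ p) x := by
      have := Real.hasDerivAt_rpow_const (x := x) (p := p + 1) (Or.inl hx0.ne')
      simpa [add_sub_cancel_right] using this
    have h3 : HasDerivAt (fun ξ : ℝ => (p - 1) * (ξ - 1) ^ 2)
        ((p - 1) * (2 * (x - 1))) x := by
      have := (((hasDerivAt_id x).sub_const 1).pow 2).const_mul (p - 1)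
      simpa using this
    have := (h1.neg.add (h2.const_mul (2 / (p + 1)))).sub h3
    have heq : -(2 * x) + 2 / (p + 1) * ((p + 1) * x ^ p) - (p - 1) * (2 * (x - 1))
        = 2 * x ^ p - 2 * x - 2 * (p - 1) * (x - 1) := by
      have hne : p + 1 ≠ 0 := hp2.ne'
      field_simp
      ring
    rw [heq] at this
    exact this
  have hgc : ContinuousOn g (Icc 1 b) := by
    apply ContinuousOn.sub
    · exact ((continuous_pow 2).continuousOn.neg).add (continuousOn_const.mul hca)
    · exact (continuous_const.mul ((continuous_id.sub continuous_const).pow 2)).continuousOn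
  have hgm : MonotoneOn g (Icc 1 b) := by
    apply monotoneOn_of_deriv_nonneg (convex_Icc 1 b) hgc
    · intro x hx
      rw [interior_Icc] at hx
      exact (hder x hx).differentiableAt.differentiableWithinAt
    · intro x hx
      rw [interior_Icc] at hx
      rw [(hder x hx).deriv]
      have hx1 : (1:ℝ) ≤ x := hx.1.le
      have hx0 : (0:ℝ) < x := by linarith
      have hxp : x ^ p = x * x ^ (p - 1) := by
        rw [show p = 1 + (p - 1) by ring, Real.rpow_add hx0, Real.rpow_one]
        ring_nf
      have hexp : 1 + (p - 1) * Real.log x ≤ x ^ (p - 1) := by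
        rw [Real.rpow_def_of_pos hx0, mul_comm]
        linarith [Real.add_one_le_exp (Real.log x * (p - 1))]
      have hlog : x - 1 ≤ x * Real.log x := by
        have h := Real.log_le_sub_one_of_pos (show (0:ℝ) < x⁻¹ by positivity)
        rw [Real.log_inv] at h
        have hxi : x * x⁻¹ = 1 := mul_inv_cancel₀ hx0.ne'
        nlinarith [mul_le_mul_of_nonneg_left h hx0.le]
      rw [hxp]
      nlinarith [mul_le_mul_of_nonneg_left hexp (by linarith : (0:ℝ) ≤ 2 * x),
        mul_le_mul_of_nonneg_left hlog (by linarith : (0:ℝ) ≤ 2 * (p - 1))]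
  -- key quadratic lower bound
  have key : ∀ x ∈ Icc (1:ℝ) b, ∀ y ∈ Icc (1:ℝ) b, x ≤ y →
      (p - 1) * (y - x) ^ 2 ≤ a y - a x := by
    intro x hx y hy hxy
    have := hgm hx hy hxy
    rw [hgdef] at this
    simp only [ha]
    have hx1 : (1:ℝ) ≤ x := hx.1
    nlinarith [mul_nonneg (sub_nonneg.2 hx1) (sub_nonneg.2 hxy)]
  have hmono : StrictMonoOn a (Icc (1:ℝ) b) := by
    intro x hx y hy hxy
    have h := key x hx y hy hxy.le
    nlinarith [mul_pos hp1 (pow_pos (sub_pos.2 hxy) 2)]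
  refine ⟨hmono, ?_, ?_⟩
  · -- image
    have hac : ContinuousOn a (Icc 1 b) := by
      have : ContinuousOn (fun ξ : ℝ => -ξ ^ 2 + (2 / (p + 1)) * ξ ^ (p + 1)) (Icc 1 b) :=
        ((continuous_pow 2).continuousOn.neg).add (continuousOn_const.mul hca)
      exact this.congr fun x _ => ha x
    have ha1 : a 1 = (1 - p) / (1 + p) := by
      rw [ha]
      rw [Real.one_rpow]
      field_simp
      ring
    have hab : a b = 0 := by
      rw [ha]
      have hbp : b ^ (p - 1) = (p + 1) / 2 := by
        rw [hbdef, ← Real.rpow_mul (by positivity), one_div_mul_cancel hp1.ne', Real.rpow_one]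
      have hbp1 : b ^ (p + 1) = b ^ 2 * ((p + 1) / 2) := by
        rw [show p + 1 = 2 + (p - 1) by ring, Real.rpow_add hb0, hbp, Real.rpow_two]
        ring
      rw [hbp1]
      field_simp
      ring
    apply Subset.antisymm
    · rintro y ⟨x, hx, rfl⟩
      have hmem1 : (1:ℝ) ∈ Icc (1:ℝ) b := ⟨le_refl 1, hb1.le⟩
      have hmemb : b ∈ Icc (1:ℝ) b := ⟨hb1.le, le_refl b⟩
      constructor
      · rw [← ha1]; exact hmono.monotoneOn hmem1 hx hx.1
      · rw [← hab]; exact hmono.monotoneOn hx hmemb hx.2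
    · rw [← ha1, ← hab]
      exact intermediate_value_Icc hb1.le hac
  · -- Hölder
    refine ⟨(Real.sqrt (p - 1))⁻¹, by positivity, ?_⟩
    have hs : (0:ℝ) < Real.sqrt (p - 1) := Real.sqrt_pos.2 hp1
    have main : ∀ x ∈ Icc (1:ℝ) b, ∀ y ∈ Icc (1:ℝ) b, x ≤ y →
        y - x ≤ (Real.sqrt (p - 1))⁻¹ * Real.sqrt (a y - a x) := by
      intro x hx y hy hxy
      have hk := key x hx y hy hxy
      have h1 : Real.sqrt ((p - 1) * (y - x) ^ 2) ≤ Real.sqrt (a y - a x) :=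
        Real.sqrt_le_sqrt hk
      have h2 : Real.sqrt ((p - 1) * (y - x) ^ 2) = Real.sqrt (p - 1) * (y - x) := by
        rw [Real.sqrt_mul hp1.le, Real.sqrt_sq (by linarith)]
      rw [h2] at h1
      calc y - x = (Real.sqrt (p - 1))⁻¹ * (Real.sqrt (p - 1) * (y - x)) := by
            field_simp
        _ ≤ _ := mul_le_mul_of_nonneg_left h1 (by positivity)
    intro ξ₁ h₁ ξ₂ h₂
    rcases le_total ξ₁ ξ₂ with hle | hle
    · have hka : a ξ₁ ≤ a ξ₂ := by
        have := key ξ₁ h₁ ξ₂ h₂ hle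
        nlinarith [sq_nonneg (ξ₂ - ξ₁), mul_nonneg hp1.le (sq_nonneg (ξ₂ - ξ₁))]
      rw [abs_sub_comm, abs_of_nonneg (by linarith), abs_sub_comm,
        abs_of_nonneg (by linarith)]
      exact main ξ₁ h₁ ξ₂ h₂ hle
    · have hka : a ξ₂ ≤ a ξ₁ := by
        have := key ξ₂ h₂ ξ₁ h₁ hle
        nlinarith [mul_nonneg hp1.le (sq_nonneg (ξ₁ - ξ₂))]
      rw [abs_of_nonneg (by linarith), abs_of_nonneg (by linarith)]
      exact main ξ₂ h₂ ξ₁ h₁ hle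
end
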